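/- Kernel of the adjoint operator: Let α₁,…,αₙ ∈ ℂ be linearly independent over ℚ and set H₀ = Σᵢ₌₁ⁿ αᵢ·pᵢqᵢ. Then for f ∈ ℂ[[q,p]] one has {H₀, f} = 0 if and only if f lies in the closed subalgebra of formal power series in the n products q₁p₁,…,qₙpₙ, i.e. f = P(q₁p₁,…,qₙpₙ) for some P ∈ ℂ[[X₁,…,Xₙ]]. -/

import Mathlib

/- ℂ[[q,p]] is `MvPowerSeries (Fin n ⊕ Fin n) ℂ`, where `Sum.inl i` is the
variable `qᵢ` and `Sum.inr i` is the variable `pᵢ`. -/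

open MvPowerSeries

/-- Partial derivative of a multivariate formal power series. -/
noncomputable def pd {σ : Type} [DecidableEq σ] (x : σ) (f : MvPowerSeries σ ℂ) :
    MvPowerSeries σ ℂ :=
  fun m => ((m x : ℂ) + 1) * coeff (R := ℂ) (m + Finsupp.single x 1) f

/-- The Poisson bracket `{f,g} = Σᵢ ∂_{qᵢ}f ∂_{pᵢ}g − ∂_{pᵢ}f ∂_{qᵢ}g` on ℂ[[q,p]]. -/
noncomputable def pois {n : ℕ} (f g : MvPowerSeries (Fin n ⊕ Fin n) ℂ) :
    MvPowerSeries (Fin n ⊕ Fin n) ℂ :=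
  ∑ i : Fin n, (pd (Sum.inl i) f * pd (Sum.inr i) g - pd (Sum.inr i) f * pd (Sum.inl i) g)

/-- Total degree of a monomial. -/
def mdeg {σ : Type} (m : σ →₀ ℕ) : ℕ := m.sum fun _ k => k

/-- `f = g + o(l)`: every monomial of `f − g` has total degree > `l`. -/
def OEq {σ : Type} (f g : MvPowerSeries σ ℂ) (l : ℕ) : Prop :=
  ∀ m, mdeg m ≤ l → coeff (R := ℂ) m (f - g) = 0

/-- `f` has order ≥ `a`: every monomial of `f` has total degree ≥ `a`. -/
def OrdGe {σ : Type} (f : MvPowerSeries σ ℂ) (a : ℕ) : Prop :=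
  ∀ m, mdeg m < a → coeff (R := ℂ) m f = 0

/-- Substitution `P(q₁p₁,…,qₙpₙ)` of the products `qᵢpᵢ` into a formal power series
`P ∈ ℂ[[X₁,…,Xₙ]]`: since `P(q₁p₁,…,qₙpₙ) = Σ_d (coeff_d P) q^d p^d`, its coefficient
on a monomial `q^I p^J` equals `coeff_I P` if `I = J` and `0` otherwise. -/
noncomputable def substQP {n : ℕ} (P : MvPowerSeries (Fin n) ℂ) :
    MvPowerSeries (Fin n ⊕ Fin n) ℂ :=
  fun m => if ∀ i : Fin n, m (Sum.inl i) = m (Sum.inr i) then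
    coeff (R := ℂ) (Finsupp.comapDomain Sum.inl m Sum.inl_injective.injOn) P else 0

-- scratch lemmas
lemma coeff_pd {σ : Type} [DecidableEq σ] (x : σ) (f : MvPowerSeries σ ℂ) (m : σ →₀ ℕ) :
    coeff (R := ℂ) m (pd x f) = ((m x : ℂ) + 1) * coeff (R := ℂ) (m + Finsupp.single x 1) f := rfl

lemma CXX_eq (n : ℕ) (a : ℂ) (b c : Fin n ⊕ Fin n) :
    C (σ := Fin n ⊕ Fin n) (R := ℂ) a * X b * X c =
      monomial (R := ℂ) (Finsupp.single b 1 + Finsupp.single c 1) a := by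
  rw [X, X, show (C (σ := Fin n ⊕ Fin n) (R := ℂ)) a = monomial (R := ℂ) 0 a from rfl,
    monomial_mul_monomial, monomial_mul_monomial, zero_add, mul_one, mul_one]

lemma mono_pd_mul {n : ℕ} (a : ℂ) (x : Fin n ⊕ Fin n) (f : MvPowerSeries (Fin n ⊕ Fin n) ℂ)
    (m : (Fin n ⊕ Fin n) →₀ ℕ) :
    coeff (R := ℂ) m (monomial (R := ℂ) (Finsupp.single x 1) a * pd x f) = a * (m x : ℂ) * coeff (R := ℂ) m f := by
  rw [coeff_monomial_mul]
  by_cases h : Finsupp.single x 1 ≤ m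
  · rw [if_pos h, coeff_pd]
    have hx : 1 ≤ m x := Finsupp.single_le_iff.mp h
    have h1 : m - Finsupp.single x 1 + Finsupp.single x 1 = m := tsub_add_cancel_of_le h
    rw [h1]
    have h2 : (m - Finsupp.single x 1 : (Fin n ⊕ Fin n) →₀ ℕ) x = m x - 1 := by
      rw [Finsupp.tsub_apply, Finsupp.single_eq_same]
    rw [h2]
    have h3 : ((m x - 1 : ℕ) : ℂ) + 1 = (m x : ℂ) := by
      have := Nat.cast_sub (R := ℂ) hx
      rw [this]; ring
    rw [h3]; ring
  · rw [if_neg h]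
    have : m x = 0 := by
      by_contra hmx
      exact h (Finsupp.single_le_iff.mpr (Nat.one_le_iff_ne_zero.mpr hmx))
    rw [this]; simp

lemma cond_l {n : ℕ} (i j : Fin n) (μ : (Fin n ⊕ Fin n) →₀ ℕ) :
    μ + Finsupp.single (Sum.inl i) 1 =
      Finsupp.single (Sum.inr j) 1 + Finsupp.single (Sum.inl j) 1 ↔
    j = i ∧ μ = Finsupp.single (Sum.inr i) 1 := by
  constructor
  · intro h
    have hji : j = i := by
      by_contra hne
      have := DFunLike.congr_fun h (Sum.inl i)
      simp [Finsupp.single_apply, hne] at this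
    subst hji
    exact ⟨rfl, add_right_cancel h⟩
  · rintro ⟨rfl, rfl⟩
    rw [add_comm]

lemma cond_r {n : ℕ} (i j : Fin n) (μ : (Fin n ⊕ Fin n) →₀ ℕ) :
    μ + Finsupp.single (Sum.inr i) 1 =
      Finsupp.single (Sum.inr j) 1 + Finsupp.single (Sum.inl j) 1 ↔
    j = i ∧ μ = Finsupp.single (Sum.inl i) 1 := by
  constructor
  · intro h
    have hji : j = i := by
      by_contra hne
      have := DFunLike.congr_fun h (Sum.inr i)
      simp [Finsupp.single_apply, hne] at this
    subst hji
    refine ⟨rfl, ?_⟩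
    have h' : μ + Finsupp.single (Sum.inr j) 1 =
        Finsupp.single (Sum.inl j) 1 + Finsupp.single (Sum.inr j) 1 := by
      rw [h, add_comm]
    exact add_right_cancel h'
  · rintro ⟨rfl, rfl⟩
    rw [add_comm]

lemma pd_H0_l {n : ℕ} (α : Fin n → ℂ) (i : Fin n) :
    pd (Sum.inl i) (∑ j : Fin n,
        monomial (R := ℂ) (Finsupp.single (Sum.inr j) 1 + Finsupp.single (Sum.inl j) 1) (α j)) =
      monomial (R := ℂ) (Finsupp.single (Sum.inr i) 1) (α i) := by
  apply MvPowerSeries.ext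
  intro μ
  rw [coeff_pd, map_sum, coeff_monomial]
  simp only [coeff_monomial]
  rw [Finset.sum_congr rfl (fun j _ => if_congr (cond_l i j μ) rfl rfl)]
  by_cases hμ : μ = Finsupp.single (Sum.inr i) 1
  · subst hμ
    simp [Finsupp.single_apply]
  · simp [hμ]

lemma pd_H0_r {n : ℕ} (α : Fin n → ℂ) (i : Fin n) :
    pd (Sum.inr i) (∑ j : Fin n,
        monomial (R := ℂ) (Finsupp.single (Sum.inr j) 1 + Finsupp.single (Sum.inl j) 1) (α j)) =
      monomial (R := ℂ) (Finsupp.single (Sum.inl i) 1) (α i) := by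
  apply MvPowerSeries.ext
  intro μ
  rw [coeff_pd, map_sum, coeff_monomial]
  simp only [coeff_monomial]
  rw [Finset.sum_congr rfl (fun j _ => if_congr (cond_r i j μ) rfl rfl)]
  by_cases hμ : μ = Finsupp.single (Sum.inl i) 1
  · subst hμ
    simp [Finsupp.single_apply]
  · simp [hμ]

lemma coeff_pois_H0 {n : ℕ} (α : Fin n → ℂ) (f : MvPowerSeries (Fin n ⊕ Fin n) ℂ)
    (m : (Fin n ⊕ Fin n) →₀ ℕ) :
    coeff (R := ℂ) m (pois (∑ i : Fin n, C (σ := Fin n ⊕ Fin n) (R := ℂ) (α i) * X (Sum.inr i) * X (Sum.inl i)) f)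
      = (∑ i : Fin n, α i * ((m (Sum.inr i) : ℂ) - (m (Sum.inl i) : ℂ))) * coeff (R := ℂ) m f := by
  simp only [CXX_eq]
  rw [pois, map_sum, Finset.sum_mul]
  apply Finset.sum_congr rfl
  intro i _
  rw [map_sub, pd_H0_l, pd_H0_r, mono_pd_mul, mono_pd_mul]
  ring

lemma S_eq_zero_iff {n : ℕ} (α : Fin n → ℂ) (hα : LinearIndependent ℚ α)
    (m : (Fin n ⊕ Fin n) →₀ ℕ) :
    (∑ i : Fin n, α i * ((m (Sum.inr i) : ℂ) - (m (Sum.inl i) : ℂ))) = 0 ↔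
    ∀ i, m (Sum.inl i) = m (Sum.inr i) := by
  constructor
  · intro h i
    have key := (Fintype.linearIndependent_iff.mp hα)
      (fun i => (m (Sum.inr i) : ℚ) - (m (Sum.inl i) : ℚ)) ?_ i
    · have h2 : (m (Sum.inr i) : ℚ) = (m (Sum.inl i) : ℚ) := by linarith [sub_eq_zero.mp key]
      exact_mod_cast h2.symm
    · rw [← h]
      apply Finset.sum_congr rfl
      intro j _
      rw [Rat.smul_def]
      push_cast
      ring
  · intro h
    apply Finset.sum_eq_zero
    intro i _
    rw [h i]
    ring


/-- **Kernel of the adjoint operator.** For `α₁,…,αₙ` linearly independent over ℚ and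
`H₀ = Σᵢ αᵢ pᵢqᵢ`, a formal power series `f ∈ ℂ[[q,p]]` satisfies `{H₀, f} = 0` iff
`f = P(q₁p₁,…,qₙpₙ)` for some formal power series `P ∈ ℂ[[X₁,…,Xₙ]]`. -/
theorem kernel_adjoint (n : ℕ) (α : Fin n → ℂ) (hα : LinearIndependent ℚ α)
    (f : MvPowerSeries (Fin n ⊕ Fin n) ℂ) :
    pois (∑ i : Fin n, C (σ := Fin n ⊕ Fin n) (R := ℂ) (α i) * X (Sum.inr i) * X (Sum.inl i)) f = 0 ↔
    ∃ P : MvPowerSeries (Fin n) ℂ, f = substQP P := by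
  constructor
  · intro h
    refine ⟨fun d => f (Finsupp.mapDomain Sum.inl d + Finsupp.mapDomain Sum.inr d), ?_⟩
    apply MvPowerSeries.ext
    intro m
    have hc : (∑ i : Fin n, α i * ((m (Sum.inr i) : ℂ) - (m (Sum.inl i) : ℂ))) *
        coeff (R := ℂ) m f = 0 := by
      rw [← coeff_pois_H0, h, map_zero]
    show coeff (R := ℂ) m f = coeff (R := ℂ) m (substQP _)
    rw [show coeff (R := ℂ) m (substQP (fun d => f (Finsupp.mapDomain Sum.inl d +
        Finsupp.mapDomain Sum.inr d))) = substQP (fun d => f (Finsupp.mapDomain Sum.inl d +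
        Finsupp.mapDomain Sum.inr d)) m from rfl]
    unfold substQP
    by_cases hm : ∀ i : Fin n, m (Sum.inl i) = m (Sum.inr i)
    · rw [if_pos hm]
      have hmm : Finsupp.mapDomain Sum.inl
            (Finsupp.comapDomain Sum.inl m Sum.inl_injective.injOn) +
          Finsupp.mapDomain Sum.inr
            (Finsupp.comapDomain Sum.inl m Sum.inl_injective.injOn) = m := by
        ext x
        cases x with
        | inl j =>
          rw [Finsupp.add_apply, Finsupp.mapDomain_apply Sum.inl_injective,
            Finsupp.mapDomain_notin_range _ _ (by simp), Finsupp.comapDomain_apply, add_zero]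
        | inr j =>
          rw [Finsupp.add_apply, Finsupp.mapDomain_apply Sum.inr_injective,
            Finsupp.mapDomain_notin_range _ _ (by simp), Finsupp.comapDomain_apply, zero_add,
            hm j]
      show coeff (R := ℂ) m f = f _
      rw [hmm]
      rfl
    · rw [if_neg hm]
      have hS : (∑ i : Fin n, α i * ((m (Sum.inr i) : ℂ) - (m (Sum.inl i) : ℂ))) ≠ 0 :=
        fun h0 => hm ((S_eq_zero_iff α hα m).mp h0)
      exact (mul_eq_zero.mp hc).resolve_left hS
  · rintro ⟨P, rfl⟩
    apply MvPowerSeries.ext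
    intro m
    rw [coeff_pois_H0, map_zero]
    by_cases hm : ∀ i : Fin n, m (Sum.inl i) = m (Sum.inr i)
    · rw [(S_eq_zero_iff α hα m).mpr hm, zero_mul]
    · have : coeff (R := ℂ) m (substQP P) = 0 := by
        show substQP P m = 0
        unfold substQP
        rw [if_neg hm]
      rw [this, mul_zero]
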